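/- Let α > 0 and β ∈ (0,1), and let (q_n) be a sequence with q_n ∈ (0,1) for every positive integer n such that q_n ~ α·(2πn)^{-β} as n → ∞. Then P_n(q_n) ~ α^{-1/2}·(2πn)^{-(1-β)/2} as n → ∞. -/

import Mathlib

open Real Filter Topology

/-- Generalized binomial coefficient `binom(n, α) = n! / (Γ(α+1)·Γ(n-α+1))`. -/
noncomputable def gbinom (n : ℕ) (a : ℝ) : ℝ :=
  (n.factorial : ℝ) / (Real.Gamma (a + 1) * Real.Gamma ((n : ℝ) - a + 1))

/-- The function `P_n(p) = binom(n, np) · p^(np) · (1-p)^(n(1-p))`. -/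
noncomputable def Pn (n : ℕ) (p : ℝ) : ℝ :=
  gbinom n ((n : ℝ) * p) * p ^ ((n : ℝ) * p) * (1 - p) ^ ((n : ℝ) * (1 - p))


noncomputable def Gst (x : ℝ) : ℝ := Real.sqrt (2 * π * x) * Real.exp (x * Real.log x - x)
noncomputable def Fst (x : ℝ) : ℝ := Real.Gamma (x + 1) / Gst x

lemma Gst_pos {x : ℝ} (hx : 0 < x) : 0 < Gst x := by
  unfold Gst; positivity

lemma Fst_pos {x : ℝ} (hx : 0 < x) : 0 < Fst x := by
  unfold Fst
  exact div_pos (Real.Gamma_pos_of_pos (by linarith)) (Gst_pos hx)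

lemma rpow_self_eq {x : ℝ} (hx : 0 < x) : (x / Real.exp 1) ^ x = Real.exp (x * Real.log x - x) := by
  rw [Real.rpow_def_of_pos (by positivity), Real.log_div hx.ne' (Real.exp_ne_zero 1),
    Real.log_exp]
  ring_nf

lemma Gamma_eq_Fst {x : ℝ} (hx : 0 < x) : Real.Gamma (x + 1) = Fst x * Gst x := by
  rw [Fst, div_mul_cancel₀]
  exact (Gst_pos hx).ne'

lemma Fst_nat (m : ℕ) (hm : 1 ≤ m) : Fst m = Stirling.stirlingSeq m / Real.sqrt π := by
  have hm0 : (0:ℝ) < m := by exact_mod_cast hm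
  rw [Fst, Gst, Stirling.stirlingSeq, ← rpow_self_eq hm0, Real.Gamma_nat_eq_factorial,
    ← Real.rpow_natCast ((m:ℝ)/Real.exp 1) m]
  rw [show 2 * π * (m:ℝ) = π * (2 * m) by ring, Real.sqrt_mul pi_pos.le]
  have h1 : Real.sqrt (2*(m:ℝ)) ≠ 0 := by positivity
  have h2 : ((m:ℝ)/Real.exp 1) ^ (m:ℝ) ≠ 0 := by
    have : (0:ℝ) < ((m:ℝ)/Real.exp 1) ^ (m:ℝ) := by positivity
    exact this.ne'
  have h3 : Real.sqrt π ≠ 0 := by positivity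
  field_simp

lemma tendsto_Fst_nat : Tendsto (fun m : ℕ => Fst m) atTop (𝓝 1) := by
  have h := Stirling.tendsto_stirlingSeq_sqrt_pi.div
    (tendsto_const_nhds (x := Real.sqrt π)) (by positivity)
  rw [div_self (by positivity : Real.sqrt π ≠ 0)] at h
  refine h.congr' ?_
  filter_upwards [eventually_ge_atTop 1] with m hm
  exact (Fst_nat m hm).symm

lemma psi_bounds {y x : ℝ} (hy : 1 ≤ y) (hyx : y ≤ x) :
    (x - y) * Real.log y ≤ (x * Real.log x - x) - (y * Real.log y - y) ∧
    (x * Real.log x - x) - (y * Real.log y - y) ≤ (x - y) * Real.log x := by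
  rcases eq_or_lt_of_le hyx with rfl | h
  · simp
  · have hcont : ContinuousOn (fun s : ℝ => s * Real.log s - s) (Set.Icc y x) := by
      apply ContinuousOn.sub ?_ continuousOn_id
      apply ContinuousOn.mul continuousOn_id
      exact Real.continuousOn_log.mono (fun s hs => by
        simp only [Set.mem_compl_iff, Set.mem_singleton_iff]
        have := hs.1; intro h0; rw [h0] at this; linarith)
    have hderiv : ∀ s ∈ Set.Ioo y x, HasDerivAt (fun s : ℝ => s * Real.log s - s) (Real.log s) s := by
      intro s hs
      have hs0 : s ≠ 0 := by have := hs.1; intro h0; rw [h0] at this; linarith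
      have := (Real.hasDerivAt_mul_log hs0).sub (hasDerivAt_id s)
      rwa [add_sub_cancel_right] at this
    obtain ⟨c, hc, hceq⟩ := exists_hasDerivAt_eq_slope _ _ h hcont hderiv
    have hxy : (0:ℝ) < x - y := by linarith
    have h1 : Real.log y ≤ Real.log c := Real.log_le_log (by linarith) hc.1.le
    have h2 : Real.log c ≤ Real.log x := Real.log_le_log (by linarith [hc.1]) hc.2.le
    rw [hceq] at h1 h2
    constructor
    · calc (x - y) * Real.log y ≤ (x - y) * (((x * Real.log x - x) - (y * Real.log y - y)) / (x - y)) := by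
            exact mul_le_mul_of_nonneg_left h1 hxy.le
      _ = (x * Real.log x - x) - (y * Real.log y - y) := by field_simp
    · calc (x * Real.log x - x) - (y * Real.log y - y)
          = (x - y) * (((x * Real.log x - x) - (y * Real.log y - y)) / (x - y)) := by field_simp
      _ ≤ (x - y) * Real.log x := mul_le_mul_of_nonneg_left h2 hxy.le

lemma Gamma_interp_ub {m : ℕ} (hm : 1 ≤ m) {t : ℝ} (ht0 : 0 ≤ t) (ht1 : t < 1) :
    Real.Gamma (((m:ℝ) + t) + 1) ≤ (m.factorial : ℝ) * ((m:ℝ) + 1) ^ t := by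
  rcases eq_or_lt_of_le ht0 with rfl | ht0'
  · simp [Real.Gamma_nat_eq_factorial m]
  · have key := Real.Gamma_mul_add_mul_le_rpow_Gamma_mul_rpow_Gamma
      (s := (m:ℝ) + 1) (t := (m:ℝ) + 2) (a := 1 - t) (b := t)
      (by positivity) (by positivity) (by linarith) ht0' (by ring)
    have harg : (1 - t) * ((m:ℝ) + 1) + t * ((m:ℝ) + 2) = ((m:ℝ) + t) + 1 := by ring
    rw [harg] at key
    have h1 : Real.Gamma ((m:ℝ) + 1) = (m.factorial : ℝ) := Real.Gamma_nat_eq_factorial m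
    have h2 : Real.Gamma ((m:ℝ) + 2) = ((m+1).factorial : ℝ) := by
      have := Real.Gamma_nat_eq_factorial (m+1)
      push_cast at this ⊢
      rw [show (m:ℝ) + 2 = ((m:ℝ) + 1) + 1 by ring, this]
    rw [h1, h2] at key
    have hfac : ((m+1).factorial : ℝ) = ((m:ℝ) + 1) * m.factorial := by
      rw [Nat.factorial_succ]; push_cast; ring
    have hfpos : (0:ℝ) < m.factorial := by exact_mod_cast m.factorial_pos
    calc Real.Gamma (((m:ℝ) + t) + 1) ≤ (m.factorial:ℝ) ^ (1-t) * (((m:ℝ) + 1) * m.factorial) ^ t := by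
          rw [← hfac]; exact key
    _ = (m.factorial : ℝ) * ((m:ℝ) + 1) ^ t := by
        rw [Real.mul_rpow (by positivity) hfpos.le, ← mul_assoc,
          mul_comm ((m.factorial:ℝ) ^ (1-t)), mul_assoc, ← Real.rpow_add hfpos,
          show (1:ℝ) - t + t = 1 by ring, Real.rpow_one]
        ring

lemma Gamma_interp_lb {m : ℕ} (hm : 1 ≤ m) {t : ℝ} (ht0 : 0 ≤ t) (ht1 : t < 1) :
    ((m+1).factorial : ℝ) / (((m:ℝ) + t) + 1) ^ (1 - t) ≤ Real.Gamma (((m:ℝ) + t) + 1) := by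
  set x : ℝ := (m:ℝ) + t with hxdef
  have hx1 : (1:ℝ) ≤ x := by
    have h1m : (1:ℝ) ≤ (m:ℝ) := by exact_mod_cast hm
    rw [hxdef]; linarith
  have hxpos : (0:ℝ) < x + 1 := by linarith
  have hGpos : 0 < Real.Gamma (x + 1) := Real.Gamma_pos_of_pos (by linarith)
  rcases eq_or_lt_of_le ht0 with rfl | ht0'
  · have hxm : x = (m:ℝ) := by simp [hxdef]
    have hfac : ((m+1).factorial : ℝ) = ((m:ℝ) + 1) * m.factorial := by
      rw [Nat.factorial_succ]; push_cast; ring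
    rw [hxm, Real.Gamma_nat_eq_factorial m, hfac, sub_zero, Real.rpow_one,
      mul_div_assoc]
    rw [mul_comm ((m:ℝ)+1), div_mul_cancel₀ _ (by positivity : ((m:ℝ)+1) ≠ 0)]
  · have key := Real.Gamma_mul_add_mul_le_rpow_Gamma_mul_rpow_Gamma
      (s := x + 1) (t := x + 2) (a := t) (b := 1 - t)
      (by linarith) (by linarith) ht0' (by linarith) (by ring)
    have harg : t * (x + 1) + (1 - t) * (x + 2) = (m:ℝ) + 2 := by
      rw [hxdef]; ring
    rw [harg] at key
    have h2 : Real.Gamma ((m:ℝ) + 2) = ((m+1).factorial : ℝ) := by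
      have := Real.Gamma_nat_eq_factorial (m+1)
      push_cast at this ⊢
      rw [show (m:ℝ) + 2 = ((m:ℝ) + 1) + 1 by ring, this]
    have h3 : Real.Gamma (x + 2) = (x+1) * Real.Gamma (x+1) := by
      rw [show x + 2 = (x + 1) + 1 by ring, Real.Gamma_add_one (by linarith)]
    rw [h2, h3] at key
    have key2 : ((m+1).factorial : ℝ) ≤ Real.Gamma (x+1) * (x+1) ^ (1-t) := by
      calc ((m+1).factorial : ℝ) ≤ Real.Gamma (x+1) ^ t * ((x+1) * Real.Gamma (x+1)) ^ (1-t) := key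
      _ = Real.Gamma (x+1) * (x+1) ^ (1-t) := by
          rw [Real.mul_rpow hxpos.le hGpos.le, ← mul_assoc, mul_comm (Real.Gamma (x+1) ^ t),
            mul_assoc, mul_comm (Real.Gamma (x+1) ^ t), ← Real.rpow_add hGpos,
            show (1:ℝ) - t + t = 1 by ring, Real.rpow_one]
          ring
    rw [div_le_iff₀ (by positivity)]
    linarith [key2]

lemma Fst_ub {m : ℕ} (hm : 1 ≤ m) {t : ℝ} (ht0 : 0 ≤ t) (ht1 : t < 1) :
    Fst ((m:ℝ) + t) ≤ Fst m * (((m:ℝ) + 1) / m) := by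
  have hM : (1:ℝ) ≤ (m:ℝ) := by exact_mod_cast hm
  set M : ℝ := (m:ℝ) with hMdef
  have hMpos : (0:ℝ) < M := by linarith
  set x : ℝ := M + t with hxdef
  have hx1 : (1:ℝ) ≤ x := by rw [hxdef]; linarith
  have hMx : M ≤ x := by rw [hxdef]; linarith
  have hGx : 0 < Gst x := Gst_pos (by linarith)
  have hGM : 0 < Gst M := Gst_pos hMpos
  have hGlb : Gst M * M ^ (t:ℝ) ≤ Gst x := by
    have hpsi := (psi_bounds hM hMx).1
    rw [show x - M = t by rw [hxdef]; ring] at hpsi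
    unfold Gst
    rw [mul_assoc, Real.rpow_def_of_pos hMpos t, ← Real.exp_add]
    exact mul_le_mul (Real.sqrt_le_sqrt (by nlinarith [Real.pi_pos]))
      (Real.exp_le_exp.2 (by linarith)) (Real.exp_pos _).le (Real.sqrt_nonneg _)
  have hMt : (0:ℝ) < M ^ (t:ℝ) := Real.rpow_pos_of_pos hMpos t
  calc Fst x = Real.Gamma (x + 1) / Gst x := rfl
    _ ≤ ((m.factorial:ℝ) * (M + 1) ^ (t:ℝ)) / (Gst M * M ^ (t:ℝ)) :=
        div_le_div₀ (by positivity) (Gamma_interp_ub hm ht0 ht1) (by positivity) hGlb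
    _ = Fst M * (((M + 1) / M) ^ (t:ℝ)) := by
        rw [Fst, hMdef, Real.Gamma_nat_eq_factorial,
          Real.div_rpow (by linarith) hMpos.le]
        field_simp
        rfl
    _ ≤ Fst M * ((M + 1) / M) := by
        apply mul_le_mul_of_nonneg_left ?_ (Fst_pos hMpos).le
        calc ((M + 1) / M) ^ (t:ℝ) ≤ ((M + 1) / M) ^ (1:ℝ) :=
              Real.rpow_le_rpow_of_exponent_le (by rw [le_div_iff₀ hMpos]; linarith) ht1.le
        _ = (M + 1) / M := Real.rpow_one _

lemma Fst_lb {m : ℕ} (hm : 1 ≤ m) {t : ℝ} (ht0 : 0 ≤ t) (ht1 : t < 1) :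
    Fst m * ((((m:ℝ) + 1) / ((m:ℝ) + 2)) * Real.sqrt ((m:ℝ) / ((m:ℝ) + 1)))
      ≤ Fst ((m:ℝ) + t) := by
  have hM : (1:ℝ) ≤ (m:ℝ) := by exact_mod_cast hm
  set M : ℝ := (m:ℝ) with hMdef
  have hMpos : (0:ℝ) < M := by linarith
  set x : ℝ := M + t with hxdef
  have hx1 : (1:ℝ) ≤ x := by rw [hxdef]; linarith
  have hMx : M ≤ x := by rw [hxdef]; linarith
  have hxM1 : x ≤ M + 1 := by rw [hxdef]; linarith
  have hGx : 0 < Gst x := Gst_pos (by linarith)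
  have hGM : 0 < Gst M := Gst_pos hMpos
  have hGub : Gst x ≤ Gst M * Real.sqrt ((M + 1) / M) * (M + 1) ^ (t:ℝ) := by
    have hpsi := (psi_bounds hM hMx).2
    rw [show x - M = t by rw [hxdef]; ring] at hpsi
    have hlogx : t * Real.log x ≤ t * Real.log (M + 1) :=
      mul_le_mul_of_nonneg_left (Real.log_le_log (by linarith) hxM1) ht0
    have e1 : Real.sqrt (2 * π * x) ≤ Real.sqrt (2 * π * M) * Real.sqrt ((M + 1) / M) := by
      rw [← Real.sqrt_mul (by positivity)]
      apply Real.sqrt_le_sqrt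
      rw [show 2 * π * M * ((M + 1) / M) = 2 * π * (M + 1) by field_simp]
      nlinarith [Real.pi_pos]
    have e2 : Real.exp (x * Real.log x - x) ≤
        Real.exp (M * Real.log M - M) * (M + 1) ^ (t:ℝ) := by
      rw [Real.rpow_def_of_pos (by linarith) t, ← Real.exp_add]
      exact Real.exp_le_exp.2 (by linarith)
    calc Gst x = Real.sqrt (2 * π * x) * Real.exp (x * Real.log x - x) := rfl
      _ ≤ (Real.sqrt (2 * π * M) * Real.sqrt ((M + 1) / M)) *
          (Real.exp (M * Real.log M - M) * (M + 1) ^ (t:ℝ)) :=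
          mul_le_mul e1 e2 (Real.exp_pos _).le (by positivity)
      _ = Gst M * Real.sqrt ((M + 1) / M) * (M + 1) ^ (t:ℝ) := by rw [Gst]; ring
  have hkey : (M + 1) ^ (t:ℝ) * (x + 1) ^ ((1:ℝ) - t) ≤ M + 2 := by
    have h1 : (M + 1) ^ (t:ℝ) ≤ (M + 2) ^ (t:ℝ) :=
      Real.rpow_le_rpow (by linarith) (by linarith) ht0
    have h2 : (x + 1) ^ ((1:ℝ) - t) ≤ (M + 2) ^ ((1:ℝ) - t) :=
      Real.rpow_le_rpow (by linarith) (by linarith) (by linarith)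
    calc (M + 1) ^ (t:ℝ) * (x + 1) ^ ((1:ℝ) - t) ≤ (M + 2) ^ (t:ℝ) * (M + 2) ^ ((1:ℝ) - t) :=
          mul_le_mul h1 h2 (Real.rpow_nonneg (by linarith) _) (Real.rpow_nonneg (by linarith) _)
      _ = M + 2 := by
          rw [← Real.rpow_add (by linarith), show t + ((1:ℝ) - t) = 1 by ring, Real.rpow_one]
  have hFM : Fst M = (m.factorial:ℝ) / Gst M := by
    rw [Fst, hMdef, Real.Gamma_nat_eq_factorial]
  have hsq : Real.sqrt (M / (M + 1)) * Real.sqrt ((M + 1) / M) = 1 := by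
    rw [← Real.sqrt_mul (by positivity), show M / (M + 1) * ((M + 1) / M) = 1 by field_simp,
      Real.sqrt_one]
  have hbig : Fst M * (((M + 1) / (M + 2)) * Real.sqrt (M / (M + 1))) ≤
      (((m+1).factorial : ℝ) / (x + 1) ^ ((1:ℝ) - t)) /
        (Gst M * Real.sqrt ((M + 1) / M) * (M + 1) ^ (t:ℝ)) := by
    rw [le_div_iff₀ (by positivity), le_div_iff₀ (by positivity)]
    have heq : Fst M * ((M + 1) / (M + 2) * Real.sqrt (M / (M + 1))) *
        (Gst M * Real.sqrt ((M + 1) / M) * (M + 1) ^ (t:ℝ)) * (x + 1) ^ ((1:ℝ) - t)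
        = ((m.factorial:ℝ) * ((M + 1) / (M + 2)) *
            ((M + 1) ^ (t:ℝ) * (x + 1) ^ ((1:ℝ) - t))) *
          (Real.sqrt (M / (M + 1)) * Real.sqrt ((M + 1) / M)) * (Gst M / Gst M) := by
      rw [hFM]; ring
    rw [heq, hsq, div_self hGM.ne', mul_one, mul_one]
    calc (m.factorial:ℝ) * ((M + 1) / (M + 2)) * ((M + 1) ^ (t:ℝ) * (x + 1) ^ ((1:ℝ) - t))
        ≤ (m.factorial:ℝ) * ((M + 1) / (M + 2)) * (M + 2) :=
          mul_le_mul_of_nonneg_left hkey (by positivity)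
      _ = ((m+1).factorial : ℝ) := by
          rw [Nat.factorial_succ]
          push_cast
          rw [hMdef] at *
          field_simp
  calc Fst M * (((M + 1) / (M + 2)) * Real.sqrt (M / (M + 1)))
      ≤ (((m+1).factorial : ℝ) / (x + 1) ^ ((1:ℝ) - t)) /
          (Gst M * Real.sqrt ((M + 1) / M) * (M + 1) ^ (t:ℝ)) := hbig
    _ ≤ Real.Gamma (x + 1) / Gst x :=
        div_le_div₀ (Real.Gamma_pos_of_pos (by linarith)).le
          (Gamma_interp_lb hm ht0 ht1) hGx hGub
    _ = Fst x := rfl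

lemma aux_tendsto_one (b c : ℝ) :
    Tendsto (fun m : ℕ => ((m:ℝ) + b) / ((m:ℝ) + c)) atTop (𝓝 1) := by
  have h1 : Tendsto (fun m : ℕ => (m:ℝ) + c) atTop atTop :=
    tendsto_atTop_add_const_right atTop c tendsto_natCast_atTop_atTop
  have h2 : Tendsto (fun m : ℕ => (b - c) / ((m:ℝ) + c)) atTop (𝓝 0) :=
    Tendsto.div_atTop tendsto_const_nhds h1
  have h3 : Tendsto (fun m : ℕ => 1 + (b - c) / ((m:ℝ) + c)) atTop (𝓝 (1 + 0)) :=
    tendsto_const_nhds.add h2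
  rw [add_zero] at h3
  refine h3.congr' ?_
  filter_upwards [h1.eventually_gt_atTop 0] with m hm
  have hne : ((m:ℝ) + c) ≠ 0 := hm.ne'
  field_simp
  ring

lemma tendsto_Fst : Tendsto Fst atTop (𝓝 1) := by
  have hfloor : Tendsto (fun x : ℝ => ⌊x⌋₊) atTop atTop := tendsto_nat_floor_atTop
  have hup : Tendsto (fun m : ℕ => Fst m * (((m:ℝ) + 1) / m)) atTop (𝓝 1) := by
    have h2 : Tendsto (fun m : ℕ => ((m:ℝ) + 1) / m) atTop (𝓝 1) := by
      simpa using aux_tendsto_one 1 0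
    simpa using tendsto_Fst_nat.mul h2
  have hlo : Tendsto
      (fun m : ℕ => Fst m * ((((m:ℝ) + 1) / ((m:ℝ) + 2)) * Real.sqrt ((m:ℝ) / ((m:ℝ) + 1))))
      atTop (𝓝 1) := by
    have h2 : Tendsto (fun m : ℕ => ((m:ℝ) + 1) / ((m:ℝ) + 2)) atTop (𝓝 1) :=
      aux_tendsto_one 1 2
    have h3 : Tendsto (fun m : ℕ => Real.sqrt ((m:ℝ) / ((m:ℝ) + 1))) atTop (𝓝 1) := by
      have h4 : Tendsto (fun m : ℕ => (m:ℝ) / ((m:ℝ) + 1)) atTop (𝓝 1) := by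
        simpa using aux_tendsto_one 0 1
      have h5 := (Real.continuous_sqrt.tendsto 1).comp h4
      rw [Real.sqrt_one] at h5
      exact h5
    simpa using tendsto_Fst_nat.mul (h2.mul h3)
  apply tendsto_of_tendsto_of_tendsto_of_le_of_le' (hlo.comp hfloor) (hup.comp hfloor)
  · filter_upwards [eventually_ge_atTop (1:ℝ)] with x hx
    have hm : 1 ≤ ⌊x⌋₊ := Nat.le_floor (by exact_mod_cast hx)
    have h0 : ((⌊x⌋₊:ℝ)) ≤ x := Nat.floor_le (by linarith)
    have h1 : x < (⌊x⌋₊:ℝ) + 1 := Nat.lt_floor_add_one x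
    have := Fst_lb hm (t := x - ⌊x⌋₊) (by linarith) (by linarith)
    rw [show ((⌊x⌋₊:ℝ)) + (x - ⌊x⌋₊) = x by ring] at this
    exact this
  · filter_upwards [eventually_ge_atTop (1:ℝ)] with x hx
    have hm : 1 ≤ ⌊x⌋₊ := Nat.le_floor (by exact_mod_cast hx)
    have h0 : ((⌊x⌋₊:ℝ)) ≤ x := Nat.floor_le (by linarith)
    have h1 : x < (⌊x⌋₊:ℝ) + 1 := Nat.lt_floor_add_one x
    have := Fst_ub hm (t := x - ⌊x⌋₊) (by linarith) (by linarith)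
    rw [show ((⌊x⌋₊:ℝ)) + (x - ⌊x⌋₊) = x by ring] at this
    exact this

lemma Pn_eq (n : ℕ) (hn : 1 ≤ n) {p : ℝ} (hp0 : 0 < p) (hp1 : p < 1) :
    Pn n p = Fst n / (Fst ((n:ℝ) * p) * Fst ((n:ℝ) * (1 - p))) /
      Real.sqrt (2 * π * n * p * (1 - p)) := by
  have hN : (0:ℝ) < (n:ℝ) := by exact_mod_cast hn
  set N : ℝ := (n:ℝ) with hNdef
  have h1p : (0:ℝ) < 1 - p := by linarith
  set u : ℝ := N * p with hudef
  set v : ℝ := N * (1 - p) with hvdef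
  have hu : 0 < u := by rw [hudef]; positivity
  have hv : 0 < v := by rw [hvdef]; positivity
  have claim : Gst u * Gst v = Gst N * p ^ u * (1 - p) ^ v *
      Real.sqrt (2 * π * N * p * (1 - p)) := by
    have e1 : Real.sqrt (2 * π * u) * Real.sqrt (2 * π * v) =
        Real.sqrt (2 * π * N) * Real.sqrt (2 * π * N * p * (1 - p)) := by
      rw [← Real.sqrt_mul (by positivity), ← Real.sqrt_mul (by positivity)]
      congr 1
      rw [hudef, hvdef]
      ring
    have e2 : Real.exp (u * Real.log u - u) * Real.exp (v * Real.log v - v) =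
        Real.exp (N * Real.log N - N) * (p ^ u * (1 - p) ^ v) := by
      rw [Real.rpow_def_of_pos hp0, Real.rpow_def_of_pos h1p,
        ← Real.exp_add, ← Real.exp_add, ← Real.exp_add]
      congr 1
      have hlu : Real.log u = Real.log N + Real.log p := by
        rw [hudef, Real.log_mul hN.ne' hp0.ne']
      have hlv : Real.log v = Real.log N + Real.log (1 - p) := by
        rw [hvdef, Real.log_mul hN.ne' h1p.ne']
      rw [hlu, hlv, hudef, hvdef]
      ring
    calc Gst u * Gst v = (Real.sqrt (2 * π * u) * Real.sqrt (2 * π * v)) *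
          (Real.exp (u * Real.log u - u) * Real.exp (v * Real.log v - v)) := by
          rw [Gst, Gst]; ring
      _ = (Real.sqrt (2 * π * N) * Real.sqrt (2 * π * N * p * (1 - p))) *
          (Real.exp (N * Real.log N - N) * (p ^ u * (1 - p) ^ v)) := by rw [e1, e2]
      _ = Gst N * p ^ u * (1 - p) ^ v * Real.sqrt (2 * π * N * p * (1 - p)) := by
          rw [Gst]; ring
  have hsqrtpos : 0 < Real.sqrt (2 * π * N * p * (1 - p)) := by positivity
  have key2 : Gst N * p ^ u * (1 - p) ^ v / (Gst u * Gst v) =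
      1 / Real.sqrt (2 * π * N * p * (1 - p)) := by
    have hX : Gst N * p ^ u * (1 - p) ^ v ≠ 0 :=
      (mul_pos (mul_pos (Gst_pos hN) (Real.rpow_pos_of_pos hp0 u))
        (Real.rpow_pos_of_pos h1p v)).ne'
    rw [claim, div_mul_eq_div_div, div_self hX]
  rw [Pn, gbinom, show N - N * p + 1 = v + 1 by rw [hvdef]; ring,
    ← hNdef, ← hudef]
  rw [show ((n.factorial : ℝ)) = Real.Gamma (N + 1) by rw [hNdef, Real.Gamma_nat_eq_factorial]]
  rw [Gamma_eq_Fst hN, Gamma_eq_Fst hu, Gamma_eq_Fst hv]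
  have e3 : Fst N * Gst N / (Fst u * Gst u * (Fst v * Gst v)) * p ^ u * (1 - p) ^ v =
      Fst N / (Fst u * Fst v) * (Gst N * p ^ u * (1 - p) ^ v / (Gst u * Gst v)) := by
    ring
  rw [e3, key2, mul_one_div, div_div]

lemma final_alg {β c p dd a F1 F2 F3 : ℝ} (hc : 0 < c) (hp : 0 < p) (hp1 : p < 1)
    (ha : 0 < a) (hdd : dd = a * c ^ (-β)) :
    F1 / (F2 * F3) / Real.sqrt (c * p * (1 - p)) /
      (a ^ (-(1/2):ℝ) * c ^ (-((1 - β) / 2))) =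
    F1 * F2⁻¹ * F3⁻¹ * (1 - p) ^ (-(1/2):ℝ) * (p / dd) ^ (-(1/2):ℝ) := by
  have h1p : 0 < 1 - p := by linarith
  have hddpos : 0 < dd := by rw [hdd]; positivity
  have hlogdd : Real.log dd = Real.log a + (-β) * Real.log c := by
    rw [hdd, Real.log_mul ha.ne' (Real.rpow_pos_of_pos hc _).ne', Real.log_rpow hc]
  have e1 : Real.sqrt (c * p * (1 - p)) =
      Real.exp ((1/2) * (Real.log c + Real.log p + Real.log (1 - p))) := by
    rw [Real.sqrt_eq_rpow, Real.rpow_def_of_pos (by positivity),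
      Real.log_mul (by positivity) h1p.ne', Real.log_mul hc.ne' hp.ne']
    congr 1; ring
  have e2 : a ^ (-(1/2):ℝ) = Real.exp (-(1/2) * Real.log a) := by
    rw [Real.rpow_def_of_pos ha]; congr 1; ring
  have e3 : c ^ (-((1 - β) / 2)) = Real.exp (-((1 - β) / 2) * Real.log c) := by
    rw [Real.rpow_def_of_pos hc]; congr 1; ring
  have e4 : (1 - p) ^ (-(1/2):ℝ) = Real.exp (-(1/2) * Real.log (1 - p)) := by
    rw [Real.rpow_def_of_pos h1p]; congr 1; ring
  have e5 : (p / dd) ^ (-(1/2):ℝ) = Real.exp (-(1/2) * (Real.log p - Real.log dd)) := by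
    rw [Real.rpow_def_of_pos (by positivity), Real.log_div hp.ne' hddpos.ne']
    congr 1; ring
  rw [e1, e2, e3, e4, e5, hlogdd]
  rw [div_div, div_div, ← Real.exp_add, ← Real.exp_add,
    mul_assoc (F1 * F2⁻¹ * F3⁻¹), ← Real.exp_add]
  rw [show -(1/2) * Real.log (1 - p) +
        -(1/2) * (Real.log p - (Real.log a + -β * Real.log c)) =
      -((1/2) * (Real.log c + Real.log p + Real.log (1 - p)) +
        (-(1/2) * Real.log a + -((1 - β) / 2) * Real.log c)) by ring]
  rw [Real.exp_neg]
  ring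


/-- If `α > 0`, `β ∈ (0,1)`, and `q_n ∈ (0,1)` with `q_n ~ α·(2πn)^{-β}`, then
`P_n(q_n) ~ α^{-1/2}·(2πn)^{-(1-β)/2}` as `n → ∞`. -/
theorem asymptotic_iteration_step (a β : ℝ) (ha : 0 < a) (hβ : β ∈ Set.Ioo (0:ℝ) 1)
    (q : ℕ → ℝ) (hq : ∀ n : ℕ, 0 < n → q n ∈ Set.Ioo (0:ℝ) 1)
    (hasym : Tendsto (fun n : ℕ => q n / (a * (2 * π * n) ^ (-β))) atTop (𝓝 1)) :
    Tendsto
      (fun n : ℕ => Pn n (q n) / (a ^ (-(1/2 : ℝ)) * (2 * π * n) ^ (-((1 - β) / 2))))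
      atTop (𝓝 1) := by
  obtain ⟨hb0, hb1⟩ := hβ
  have hdpos : ∀ n : ℕ, 0 < n → 0 < a * (2 * π * (n:ℝ)) ^ (-β) := by
    intro n hn
    have hnr : (0:ℝ) < (n:ℝ) := by exact_mod_cast hn
    exact mul_pos ha (Real.rpow_pos_of_pos (by positivity) _)
  have htwopin : Tendsto (fun n : ℕ => 2 * π * (n:ℝ)) atTop atTop :=
    Tendsto.const_mul_atTop (by positivity : (0:ℝ) < 2 * π) tendsto_natCast_atTop_atTop
  have hd0 : Tendsto (fun n : ℕ => a * (2 * π * (n:ℝ)) ^ (-β)) atTop (𝓝 0) := by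
    have := ((tendsto_rpow_neg_atTop hb0).comp htwopin).const_mul a
    simpa using this
  have hq0 : Tendsto q atTop (𝓝 0) := by
    have h : Tendsto (fun n : ℕ =>
        q n / (a * (2 * π * (n:ℝ)) ^ (-β)) * (a * (2 * π * (n:ℝ)) ^ (-β)))
        atTop (𝓝 0) := by
      simpa using hasym.mul hd0
    refine h.congr' ?_
    filter_upwards [eventually_gt_atTop 0] with n hn
    exact div_mul_cancel₀ _ (hdpos n hn).ne'
  have h1q : Tendsto (fun n : ℕ => 1 - q n) atTop (𝓝 1) := by
    have := (tendsto_const_nhds (x := (1:ℝ))).sub hq0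
    simpa using this
  have hnq : Tendsto (fun n : ℕ => (n:ℝ) * q n) atTop atTop := by
    have htail : Tendsto (fun n : ℕ => a * (2 * π) ^ (-β) * (n:ℝ) ^ ((1:ℝ) - β))
        atTop atTop := by
      apply Tendsto.const_mul_atTop (mul_pos ha (Real.rpow_pos_of_pos (by positivity) _))
      exact (tendsto_rpow_atTop (by linarith)).comp tendsto_natCast_atTop_atTop
    have h := Tendsto.pos_mul_atTop one_pos hasym htail
    refine h.congr' ?_
    filter_upwards [eventually_gt_atTop 0] with n hn
    have hnr : (0:ℝ) < (n:ℝ) := by exact_mod_cast hn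
    have hsplit : (2 * π * (n:ℝ)) ^ (-β) = (2 * π) ^ (-β) * (n:ℝ) ^ (-β) :=
      Real.mul_rpow (by positivity) hnr.le
    have hpow : (n:ℝ) ^ ((1:ℝ) - β) = (n:ℝ) * (n:ℝ) ^ (-β) := by
      rw [show (1:ℝ) - β = 1 + (-β) by ring, Real.rpow_add hnr, Real.rpow_one]
    rw [hsplit, hpow]
    have h1 : (0:ℝ) < (2 * π) ^ (-β) := Real.rpow_pos_of_pos (by positivity) _
    have h2 : (0:ℝ) < (n:ℝ) ^ (-β) := Real.rpow_pos_of_pos hnr _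
    field_simp
  have hn1q : Tendsto (fun n : ℕ => (n:ℝ) * (1 - q n)) atTop atTop := by
    have := Tendsto.pos_mul_atTop one_pos h1q tendsto_natCast_atTop_atTop
    exact this.congr fun n => mul_comm _ _
  have hA : Tendsto (fun n : ℕ => Fst (n:ℝ)) atTop (𝓝 1) :=
    tendsto_Fst.comp tendsto_natCast_atTop_atTop
  have hB := (tendsto_Fst.comp hnq).inv₀ one_ne_zero
  have hC := (tendsto_Fst.comp hn1q).inv₀ one_ne_zero
  rw [inv_one] at hB hC
  have hcont : ContinuousAt (fun x : ℝ => x ^ (-(1/2):ℝ)) 1 :=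
    Real.continuousAt_rpow_const 1 _ (Or.inl one_ne_zero)
  have hD : Tendsto (fun n : ℕ => (1 - q n) ^ (-(1/2):ℝ)) atTop (𝓝 1) := by
    have := hcont.tendsto.comp h1q
    rwa [Real.one_rpow] at this
  have hE : Tendsto (fun n : ℕ =>
      (q n / (a * (2 * π * (n:ℝ)) ^ (-β))) ^ (-(1/2):ℝ)) atTop (𝓝 1) := by
    have := hcont.tendsto.comp hasym
    rwa [Real.one_rpow] at this
  have hT : Tendsto (fun n : ℕ =>
      Fst (n:ℝ) * (Fst ((n:ℝ) * q n))⁻¹ * (Fst ((n:ℝ) * (1 - q n)))⁻¹ *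
        (1 - q n) ^ (-(1/2):ℝ) *
        (q n / (a * (2 * π * (n:ℝ)) ^ (-β))) ^ (-(1/2):ℝ)) atTop (𝓝 1) := by
    have := (((hA.mul hB).mul hC).mul hD).mul hE
    simpa using this
  refine hT.congr' ?_
  filter_upwards [eventually_gt_atTop 0] with n hn
  obtain ⟨hq1, hq2⟩ := hq n hn
  have hc : (0:ℝ) < 2 * π * (n:ℝ) := by
    have hnr : (0:ℝ) < (n:ℝ) := by exact_mod_cast hn
    positivity
  rw [Pn_eq n hn hq1 hq2]
  exact (final_alg (β := β) (F1 := Fst (n:ℝ)) (F2 := Fst ((n:ℝ) * q n))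
    (F3 := Fst ((n:ℝ) * (1 - q n))) hc hq1 hq2 ha rfl).symm
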